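/- arXiv:1807.00130 — 4 statements merged into one kernel-verified Lean document; each statement's English description precedes it below -/
import Mathlib

section
/- Fix natural numbers n ≥ 1 and ε, data y : ZMod n → ℝ, and λ ≥ 0. A strategy profile (f, c) with f, c : ZMod n → ℝ is a Nash equilibrium of the asymmetric co-operative game if and only if for every t ∈ ZMod n: c(t) = (A f)(t) and f(t) = (y(t) + λ·c(t))/(1+λ). Consequently, at any Nash equilibrium the predictor satisfies the fixed-point equation f = (1/(1+λ)) · (y + λ · A f). -/
lemma sum_sq_shift (S : Finset ℤ) (a : ℤ → ℝ) (γ μ : ℝ)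
    (hμ : (S.card : ℝ) * μ = ∑ s ∈ S, a s) :
    ∑ s ∈ S, (a s - γ)^2 = (∑ s ∈ S, (a s - μ)^2) + (S.card : ℝ) * (γ - μ)^2 := by
  have h1 : ∀ δ : ℝ, ∑ s ∈ S, (a s - δ)^2
      = (∑ s ∈ S, (a s)^2) - 2*δ*(∑ s ∈ S, a s) + (S.card : ℝ)*δ^2 := by
    intro δ
    rw [Finset.sum_congr rfl (fun s _ => by ring :
      ∀ s ∈ S, (a s - δ)^2 = (a s)^2 - 2*δ*(a s) + δ^2)]
    rw [Finset.sum_add_distrib, Finset.sum_sub_distrib, ← Finset.mul_sum, Finset.sum_const,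
      nsmul_eq_mul]
  rw [h1 γ, h1 μ]
  linear_combination (2*γ - 2*μ) * hμ

lemma point_sq (lam yy cc x m : ℝ) (hm : m * (1+lam) = yy + lam*cc) :
    (x - yy)^2 + lam*(x - cc)^2 = ((m - yy)^2 + lam*(m - cc)^2) + (1+lam)*(x - m)^2 := by
  linear_combination (2*x - 2*m) * hm

/-- The window-averaging operator `A` on functions `ZMod n → ℝ`:
`(A f)(t) = (1/(2ε+1)) · ∑_{s = -ε}^{ε} f(t + s)`. -/
noncomputable def winAvg (n ε : ℕ) (f : ZMod n → ℝ) : ZMod n → ℝ :=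
  fun t => (1 / (2 * (ε : ℝ) + 1)) * ∑ s ∈ Finset.Icc (-(ε : ℤ)) (ε : ℤ), f (t + (s : ZMod n))

/-- Nash equilibrium of the asymmetric co-operative game: (i) each constant
explainer `c t` minimizes the local deviation `∑_{s=-ε}^{ε} (f(t+s) - γ)²`;
(ii) the predictor `f` minimizes `∑_t [(f'(t) - y(t))² + λ (f'(t) - c(t))²]`. -/
def AsymEquilibrium (n ε : ℕ) [NeZero n] (y : ZMod n → ℝ) (lam : ℝ)
    (f c : ZMod n → ℝ) : Prop :=
  (∀ t : ZMod n, ∀ γ : ℝ,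
    ∑ s ∈ Finset.Icc (-(ε : ℤ)) (ε : ℤ), (f (t + (s : ZMod n)) - c t) ^ 2 ≤
    ∑ s ∈ Finset.Icc (-(ε : ℤ)) (ε : ℤ), (f (t + (s : ZMod n)) - γ) ^ 2) ∧
  (∀ f' : ZMod n → ℝ,
    ∑ t : ZMod n, ((f t - y t) ^ 2 + lam * (f t - c t) ^ 2) ≤
    ∑ t : ZMod n, ((f' t - y t) ^ 2 + lam * (f' t - c t) ^ 2))

/-- `(f, c)` is a Nash equilibrium of the asymmetric co-operative game
iff for every `t`, `c t = (A f) t` and `f t = (y t + λ c t)/(1+λ)`; consequently,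
at any Nash equilibrium `f = (1/(1+λ)) · (y + λ · A f)`. -/
theorem asymmetric_equilibrium_characterization (n ε : ℕ) [NeZero n]
    (y : ZMod n → ℝ) (lam : ℝ) (hlam : 0 ≤ lam) :
    (∀ f c : ZMod n → ℝ,
      AsymEquilibrium n ε y lam f c ↔
      (∀ t : ZMod n, c t = winAvg n ε f t ∧
        f t = (y t + lam * c t) / (1 + lam))) ∧
    (∀ f c : ZMod n → ℝ, AsymEquilibrium n ε y lam f c →
      ∀ t : ZMod n, f t = (1 / (1 + lam)) * (y t + lam * winAvg n ε f t)) := by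
  have h1pos : (0:ℝ) < 1 + lam := by linarith
  have h1ne : (1:ℝ) + lam ≠ 0 := ne_of_gt h1pos
  have hNpos : (0:ℝ) < 2 * (ε:ℝ) + 1 := by positivity
  have hcard : (((Finset.Icc (-(ε:ℤ)) (ε:ℤ)).card : ℝ)) = 2 * (ε:ℝ) + 1 := by
    rw [Int.card_Icc]
    have : ((ε:ℤ) + 1 - -(ε:ℤ)).toNat = 2*ε + 1 := by omega
    rw [this]; push_cast; ring
  have hμ : ∀ (f : ZMod n → ℝ) (t : ZMod n),
      (((Finset.Icc (-(ε:ℤ)) (ε:ℤ)).card : ℝ)) * winAvg n ε f t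
        = ∑ s ∈ Finset.Icc (-(ε:ℤ)) (ε:ℤ), f (t + (s : ZMod n)) := by
    intro f t
    rw [hcard, winAvg]
    field_simp
  have main : ∀ f c : ZMod n → ℝ,
      AsymEquilibrium n ε y lam f c ↔
      (∀ t : ZMod n, c t = winAvg n ε f t ∧
        f t = (y t + lam * c t) / (1 + lam)) := by
    intro f c
    constructor
    · rintro ⟨hci, hfi⟩ t
      have hc : c t = winAvg n ε f t := by
        have h := hci t (winAvg n ε f t)
        rw [sum_sq_shift _ _ (c t) (winAvg n ε f t) (hμ f t)] at h
        have hsq : (((Finset.Icc (-(ε:ℤ)) (ε:ℤ)).card : ℝ)) * (c t - winAvg n ε f t)^2 ≤ 0 := by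
          linarith
        rw [hcard] at hsq
        nlinarith [sq_nonneg (c t - winAvg n ε f t)]
      refine ⟨hc, ?_⟩
      set m := (y t + lam * c t) / (1 + lam) with hmdef
      have hm : m * (1 + lam) = y t + lam * c t := by
        rw [hmdef]; field_simp
      have h := hfi (Function.update f t m)
      have split : ∀ g : ZMod n → ℝ,
          ∑ x : ZMod n, ((g x - y x)^2 + lam * (g x - c x)^2)
            = (∑ x ∈ Finset.univ.erase t, ((g x - y x)^2 + lam * (g x - c x)^2))
              + ((g t - y t)^2 + lam * (g t - c t)^2) :=
        fun g => (Finset.sum_erase_add _ _ (Finset.mem_univ t)).symm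
      rw [split f, split (Function.update f t m)] at h
      have herase : ∑ x ∈ Finset.univ.erase t,
            ((Function.update f t m x - y x)^2 + lam * (Function.update f t m x - c x)^2)
          = ∑ x ∈ Finset.univ.erase t, ((f x - y x)^2 + lam * (f x - c x)^2) := by
        refine Finset.sum_congr rfl fun x hx => ?_
        rw [Function.update_of_ne (Finset.ne_of_mem_erase hx)]
      rw [herase, Function.update_self] at h
      have h2 : (f t - y t)^2 + lam * (f t - c t)^2 ≤ (m - y t)^2 + lam * (m - c t)^2 := by
        linarith
      rw [point_sq lam (y t) (c t) (f t) m hm] at h2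
      nlinarith [sq_nonneg (f t - m)]
    · intro h
      constructor
      · intro t γ
        rw [sum_sq_shift _ _ γ (winAvg n ε f t) (hμ f t),
          sum_sq_shift _ _ (c t) (winAvg n ε f t) (hμ f t), (h t).1]
        have : (0:ℝ) ≤ (((Finset.Icc (-(ε:ℤ)) (ε:ℤ)).card : ℝ)) * (γ - winAvg n ε f t)^2 := by
          positivity
        simp only [sub_self]
        nlinarith [sq_nonneg (winAvg n ε f t - winAvg n ε f t)]
      · intro f'
        refine Finset.sum_le_sum fun x _ => ?_
        have hm : f x * (1 + lam) = y x + lam * c x := by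
          rw [(h x).2]; field_simp
        rw [point_sq lam (y x) (c x) (f' x) (f x) hm]
        nlinarith [sq_nonneg (f' x - f x)]
  refine ⟨main, fun f c h t => ?_⟩
  obtain ⟨hc, hf⟩ := (main f c).mp h t
  rw [hf, hc, div_eq_mul_inv, one_div]
  ring
end

section
/- Fix natural numbers n ≥ 1 and ε, data y : ZMod n → ℝ, and λ ≥ 0, and fix constant explainers c : ZMod n → ℝ. The symmetric-game predictor objective J(f′) = Σ_t [(f′(t) − y(t))² + (λ/(2ε+1)) · Σ_{s=−ε}^{ε} (f′(t+s) − c(t))²] has a unique minimizer over all f′ : ZMod n → ℝ, given pointwise by f′(u) = (y(u) + λ·(A c)(u))/(1+λ), where (A c)(u) = (1/(2ε+1)) · Σ_{s = −ε}^{ε} c(u + s). -/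
/-- The symmetric-game predictor objective for fixed constant explainers `c`:
`J(f') = ∑_t [(f'(t) - y(t))² + (λ/(2ε+1)) ∑_{s=-ε}^{ε} (f'(t+s) - c(t))²]`. -/
noncomputable def symObjective (n ε : ℕ) [NeZero n] (y : ZMod n → ℝ) (lam : ℝ)
    (c : ZMod n → ℝ) (f' : ZMod n → ℝ) : ℝ :=
  ∑ t : ZMod n, ((f' t - y t) ^ 2 +
    (lam / (2 * (ε : ℝ) + 1)) *
      ∑ s ∈ Finset.Icc (-(ε : ℤ)) (ε : ℤ), (f' (t + (s : ZMod n)) - c t) ^ 2)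

lemma card_Icc_eps (ε : ℕ) : (Finset.Icc (-(ε : ℤ)) (ε : ℤ)).card = 2 * ε + 1 := by
  rw [Int.card_Icc]; omega

lemma rearrange_sym (n ε : ℕ) [NeZero n] (y : ZMod n → ℝ) (lam : ℝ) (c f' : ZMod n → ℝ) :
    (∑ t : ZMod n, ((f' t - y t) ^ 2 +
      (lam / (2 * (ε : ℝ) + 1)) *
        ∑ s ∈ Finset.Icc (-(ε : ℤ)) (ε : ℤ), (f' (t + (s : ZMod n)) - c t) ^ 2)) =
    ∑ u : ZMod n, ((f' u - y u) ^ 2 +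
      (lam / (2 * (ε : ℝ) + 1)) *
        ∑ s ∈ Finset.Icc (-(ε : ℤ)) (ε : ℤ), (f' u - c (u + (s : ZMod n))) ^ 2) := by
  rw [Finset.sum_add_distrib, Finset.sum_add_distrib]
  congr 1
  rw [← Finset.mul_sum, ← Finset.mul_sum]
  congr 1
  rw [Finset.sum_comm, Finset.sum_comm (s := Finset.univ)]
  refine Finset.sum_equiv (Equiv.neg ℤ) (by intro i; simp; omega) ?_
  intro s hs
  refine Fintype.sum_equiv (Equiv.addRight ((s : ZMod n))) _ _ ?_
  intro u
  simp only [Equiv.coe_addRight, Equiv.neg_apply]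
  push_cast
  ring_nf

lemma sq_expand (ε : ℕ) (g : ℤ → ℝ) (x : ℝ) :
    ∑ s ∈ Finset.Icc (-(ε : ℤ)) (ε : ℤ), (x - g s) ^ 2 =
      (2 * (ε : ℝ) + 1) * x ^ 2
        - 2 * x * (∑ s ∈ Finset.Icc (-(ε : ℤ)) (ε : ℤ), g s)
        + ∑ s ∈ Finset.Icc (-(ε : ℤ)) (ε : ℤ), (g s) ^ 2 := by
  have h : ∀ s ∈ Finset.Icc (-(ε : ℤ)) (ε : ℤ),
      (x - g s) ^ 2 = x ^ 2 - 2 * x * g s + (g s) ^ 2 := by intro s _; ring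
  rw [Finset.sum_congr rfl h, Finset.sum_add_distrib, Finset.sum_sub_distrib,
    Finset.sum_const, card_Icc_eps, ← Finset.mul_sum]
  ring

lemma pointwise_quad (k yv S lam x : ℝ) (hk : k ≠ 0) (hlam : 0 ≤ lam) :
    (x - yv) ^ 2 + (lam / k) * (k * x ^ 2 - 2 * x * S)
      - (((yv + lam * ((1/k) * S)) / (1 + lam) - yv) ^ 2
        + (lam / k) * (k * ((yv + lam * ((1/k) * S)) / (1 + lam)) ^ 2
          - 2 * ((yv + lam * ((1/k) * S)) / (1 + lam)) * S))
    = (1 + lam) * (x - (yv + lam * ((1/k) * S)) / (1 + lam)) ^ 2 := by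
  have h1 : (1 : ℝ) + lam ≠ 0 := by positivity
  field_simp
  ring

/-- for fixed constant explainers `c`, the symmetric-game predictor
objective has a unique minimizer over all `f' : ZMod n → ℝ`, given pointwise by
`f'(u) = (y(u) + λ · (A c)(u)) / (1 + λ)`. -/
theorem symmetric_predictor_best_response (n ε : ℕ) [NeZero n]
    (y : ZMod n → ℝ) (lam : ℝ) (hlam : 0 ≤ lam) (c : ZMod n → ℝ) :
    ∀ fstar : ZMod n → ℝ,
      (∀ u : ZMod n, fstar u = (y u + lam * winAvg n ε c u) / (1 + lam)) →
      (∀ f' : ZMod n → ℝ,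
        symObjective n ε y lam c fstar ≤ symObjective n ε y lam c f') ∧
      (∀ f : ZMod n → ℝ,
        (∀ f' : ZMod n → ℝ,
          symObjective n ε y lam c f ≤ symObjective n ε y lam c f') →
        f = fstar) := by
  intro fstar hstar
  have hk : (2 * (ε : ℝ) + 1) ≠ 0 := by positivity
  -- key difference identity
  have key : ∀ f' : ZMod n → ℝ,
      symObjective n ε y lam c f' - symObjective n ε y lam c fstar
        = ∑ u : ZMod n, (1 + lam) * (f' u - fstar u) ^ 2 := by
    intro f'
    unfold symObjective
    rw [rearrange_sym n ε y lam c f', rearrange_sym n ε y lam c fstar,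
      ← Finset.sum_sub_distrib]
    apply Finset.sum_congr rfl
    intro u _
    rw [sq_expand ε (fun s => c (u + (s : ZMod n))) (f' u),
        sq_expand ε (fun s => c (u + (s : ZMod n))) (fstar u)]
    have hv : fstar u = (y u + lam * ((1 / (2 * (ε : ℝ) + 1)) *
        ∑ s ∈ Finset.Icc (-(ε : ℤ)) (ε : ℤ), c (u + (s : ZMod n)))) / (1 + lam) := by
      rw [hstar u]; rfl
    rw [hv]
    have := pointwise_quad (2 * (ε : ℝ) + 1) (y u)
      (∑ s ∈ Finset.Icc (-(ε : ℤ)) (ε : ℤ), c (u + (s : ZMod n))) lam (f' u) hk hlam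
    linarith [this]
  constructor
  · intro f'
    have h := key f'
    have hnn : (0:ℝ) ≤ ∑ u : ZMod n, (1 + lam) * (f' u - fstar u) ^ 2 := by
      apply Finset.sum_nonneg; intro u _; positivity
    linarith
  · intro f hf
    have h := key f
    have hle := hf fstar
    have hsum : ∑ u : ZMod n, (1 + lam) * (f u - fstar u) ^ 2 ≤ 0 := by linarith
    have hzero : ∀ u ∈ Finset.univ, (1 + lam) * (f u - fstar u) ^ 2 = 0 := by
      apply (Finset.sum_eq_zero_iff_of_nonneg ?_).1
      · exact le_antisymm hsum (Finset.sum_nonneg fun u _ => by positivity)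
      · intro u _; positivity
    funext u
    have := hzero u (Finset.mem_univ u)
    have h1 : (1 : ℝ) + lam ≠ 0 := by positivity
    have : (f u - fstar u) ^ 2 = 0 := by
      rcases mul_eq_zero.1 this with h | h
      · exact absurd h h1
      · exact h
    have := pow_eq_zero_iff (n := 2) (by norm_num) |>.1 this
    linarith [this]
end

section
/- Fix natural numbers n ≥ 1 and ε, data y : ZMod n → ℝ, and λ ≥ 0. A strategy profile (f, c) with f, c : ZMod n → ℝ is a Nash equilibrium of the symmetric co-operative game if and only if c = A f (i.e., c(t) = (A f)(t) for every t) and f = (1/(1+λ)) · (y + λ · A² f), where A² = A ∘ A. Thus at a symmetric-game equilibrium the predictor satisfies the same fixed-point recursion as in the asymmetric game but with the convolutional kernel A replaced by A², i.e., the kernel evolves twice as fast per recursion while the decay rate λ/(1+λ) is unchanged. -/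
lemma quad_minC {a b C : ℝ} (ha : 0 < a) (x : ℝ) :
    (∀ γ : ℝ, a*x^2 - 2*b*x + C ≤ a*γ^2 - 2*b*γ + C) ↔ a * x = b := by
  constructor
  · intro h
    have h1 := h (b/a)
    have ha' : a ≠ 0 := ha.ne'
    have h2 : a^2*x^2 - 2*a*b*x + b^2 ≤ 0 := by
      have h3 := mul_le_mul_of_nonneg_left h1 ha.le
      have h4 : a * (a*(b/a)^2 - 2*b*(b/a) + C) = -(b^2) + a*C := by field_simp; ring
      nlinarith [h3, h4]
    have h5 : (a*x - b)^2 ≤ 0 := by nlinarith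
    have h6 : (a*x - b)^2 = 0 := le_antisymm h5 (sq_nonneg _)
    have := pow_eq_zero_iff (n := 2) (by norm_num) |>.mp h6
    linarith
  · intro hx γ
    subst hx
    nlinarith [mul_nonneg ha.le (sq_nonneg (γ - x))]

lemma sum_quad_expand {ι : Type*} (W : Finset ι) (v : ι → ℝ) (x : ℝ) :
    ∑ s ∈ W, (v s - x)^2
      = (W.card : ℝ)*x^2 - 2*(∑ s ∈ W, v s)*x + ∑ s ∈ W, (v s)^2 := by
  have h : ∀ s ∈ W, (v s - x)^2 = x^2 - (2*x)*(v s) + (v s)^2 := fun s _ => by ring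
  rw [Finset.sum_congr rfl h, Finset.sum_add_distrib, Finset.sum_sub_distrib,
      Finset.sum_const, nsmul_eq_mul, ← Finset.mul_sum]
  ring


/-- Nash equilibrium of the symmetric co-operative game: (i) each constant
explainer `c t` minimizes the local deviation `∑_{s=-ε}^{ε} (f(t+s) - γ)²`;
(ii) `f` minimizes the shared objective
`∑_t [(f'(t) - y(t))² + (λ/(2ε+1)) ∑_{s=-ε}^{ε} (f'(t+s) - c(t))²]`. -/
def SymEquilibrium (n ε : ℕ) [NeZero n] (y : ZMod n → ℝ) (lam : ℝ)
    (f c : ZMod n → ℝ) : Prop :=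
  (∀ t : ZMod n, ∀ γ : ℝ,
    ∑ s ∈ Finset.Icc (-(ε : ℤ)) (ε : ℤ), (f (t + (s : ZMod n)) - c t) ^ 2 ≤
    ∑ s ∈ Finset.Icc (-(ε : ℤ)) (ε : ℤ), (f (t + (s : ZMod n)) - γ) ^ 2) ∧
  (∀ f' : ZMod n → ℝ,
    ∑ t : ZMod n, ((f t - y t) ^ 2 +
      (lam / (2 * (ε : ℝ) + 1)) *
        ∑ s ∈ Finset.Icc (-(ε : ℤ)) (ε : ℤ), (f (t + (s : ZMod n)) - c t) ^ 2) ≤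
    ∑ t : ZMod n, ((f' t - y t) ^ 2 +
      (lam / (2 * (ε : ℝ) + 1)) *
        ∑ s ∈ Finset.Icc (-(ε : ℤ)) (ε : ℤ), (f' (t + (s : ZMod n)) - c t) ^ 2))

/-- `(f, c)` is a Nash equilibrium of the symmetric co-operative game
iff `c = A f` and `f = (1/(1+λ)) · (y + λ · A² f)` where `A² = A ∘ A`: the same
fixed-point recursion as the asymmetric game with kernel `A` replaced by `A²`. -/
theorem symmetric_equilibrium_characterization (n ε : ℕ) [NeZero n]
    (y : ZMod n → ℝ) (lam : ℝ) (hlam : 0 ≤ lam) :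
    ∀ f c : ZMod n → ℝ,
      SymEquilibrium n ε y lam f c ↔
      ((∀ t : ZMod n, c t = winAvg n ε f t) ∧
       (∀ t : ZMod n,
         f t = (1 / (1 + lam)) * (y t + lam * (winAvg n ε ∘ winAvg n ε) f t))) := by
  intro f c
  have hN : (0:ℝ) < 2*(ε:ℝ)+1 := by positivity
  have hNne : (2*(ε:ℝ)+1) ≠ 0 := hN.ne'
  have h1lam : (0:ℝ) < 1 + lam := by linarith
  have hcard : (((Finset.Icc (-(ε:ℤ)) (ε:ℤ)).card : ℕ) : ℝ) = 2*(ε:ℝ)+1 := by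
    rw [Int.card_Icc]
    have h : ((ε:ℤ) + 1 - -(ε:ℤ)).toNat = 2*ε+1 := by omega
    rw [h]; push_cast; ring
  -- window symmetry
  have hsymm : ∀ g : ZMod n → ℝ, ∀ t : ZMod n,
      ∑ s ∈ Finset.Icc (-(ε:ℤ)) (ε:ℤ), g (t - (s:ZMod n))
        = ∑ s ∈ Finset.Icc (-(ε:ℤ)) (ε:ℤ), g (t + (s:ZMod n)) := by
    intro g t
    refine Finset.sum_equiv (Equiv.neg ℤ) ?_ ?_
    · intro i; simp only [Finset.mem_Icc, Equiv.neg_apply]; omega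
    · intro i _
      congr 1
      simp [Equiv.neg_apply, sub_eq_add_neg]
  -- part (i) characterization
  have keyA : ∀ t : ZMod n,
      (∀ γ : ℝ,
        ∑ s ∈ Finset.Icc (-(ε:ℤ)) (ε:ℤ), (f (t + (s:ZMod n)) - c t) ^ 2 ≤
        ∑ s ∈ Finset.Icc (-(ε:ℤ)) (ε:ℤ), (f (t + (s:ZMod n)) - γ) ^ 2)
      ↔ c t = winAvg n ε f t := by
    intro t
    have hexp : ∀ γ : ℝ,
        ∑ s ∈ Finset.Icc (-(ε:ℤ)) (ε:ℤ), (f (t + (s:ZMod n)) - γ) ^ 2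
        = (2*(ε:ℝ)+1)*γ^2
          - 2*(∑ s ∈ Finset.Icc (-(ε:ℤ)) (ε:ℤ), f (t + (s:ZMod n)))*γ
          + ∑ s ∈ Finset.Icc (-(ε:ℤ)) (ε:ℤ), (f (t + (s:ZMod n)))^2 := by
      intro γ
      rw [sum_quad_expand, hcard]
    simp only [hexp]
    rw [quad_minC hN (c t)]
    simp only [winAvg]
    constructor
    · intro h
      field_simp
      linarith
    · intro h
      rw [h]
      field_simp
  -- reindexing of the shared objective
  have hresum : ∀ g : ZMod n → ℝ,
      ∑ t : ZMod n, ((g t - y t) ^ 2 +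
        (lam / (2 * (ε : ℝ) + 1)) *
          ∑ s ∈ Finset.Icc (-(ε:ℤ)) (ε:ℤ), (g (t + (s:ZMod n)) - c t) ^ 2)
      = ∑ t : ZMod n, ((g t - y t) ^ 2 +
        (lam / (2 * (ε : ℝ) + 1)) *
          ∑ s ∈ Finset.Icc (-(ε:ℤ)) (ε:ℤ), (g t - c (t - (s:ZMod n))) ^ 2) := by
    intro g
    rw [Finset.sum_add_distrib, Finset.sum_add_distrib, ← Finset.mul_sum, ← Finset.mul_sum]
    congr 1
    congr 1
    rw [Finset.sum_comm]
    rw [show (∑ t : ZMod n, ∑ s ∈ Finset.Icc (-(ε:ℤ)) (ε:ℤ),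
          (g t - c (t - (s:ZMod n))) ^ 2)
        = ∑ s ∈ Finset.Icc (-(ε:ℤ)) (ε:ℤ), ∑ t : ZMod n,
          (g t - c (t - (s:ZMod n))) ^ 2 from Finset.sum_comm]
    refine Finset.sum_congr rfl fun s _ => ?_
    exact Fintype.sum_equiv (Equiv.addRight ((s : ZMod n))) _ _ (fun t => by simp)
  -- pointwise quadratic expansion
  have hΦexp : ∀ (t : ZMod n) (x : ℝ),
      (x - y t) ^ 2 + (lam / (2 * (ε : ℝ) + 1)) *
          ∑ s ∈ Finset.Icc (-(ε:ℤ)) (ε:ℤ), (x - c (t - (s:ZMod n))) ^ 2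
      = (1+lam)*x^2
        - 2*(y t + (lam / (2 * (ε : ℝ) + 1)) *
            ∑ s ∈ Finset.Icc (-(ε:ℤ)) (ε:ℤ), c (t - (s:ZMod n)))*x
        + ((y t)^2 + (lam / (2 * (ε : ℝ) + 1)) *
            ∑ s ∈ Finset.Icc (-(ε:ℤ)) (ε:ℤ), (c (t - (s:ZMod n)))^2) := by
    intro t x
    have h1 : ∑ s ∈ Finset.Icc (-(ε:ℤ)) (ε:ℤ), (x - c (t - (s:ZMod n))) ^ 2
        = ∑ s ∈ Finset.Icc (-(ε:ℤ)) (ε:ℤ), (c (t - (s:ZMod n)) - x) ^ 2 :=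
      Finset.sum_congr rfl fun s _ => by ring
    rw [h1, sum_quad_expand, hcard]
    field_simp
    ring
  -- part (ii) characterization
  have keyB : (∀ f' : ZMod n → ℝ,
      ∑ t : ZMod n, ((f t - y t) ^ 2 +
        (lam / (2 * (ε : ℝ) + 1)) *
          ∑ s ∈ Finset.Icc (-(ε:ℤ)) (ε:ℤ), (f (t + (s:ZMod n)) - c t) ^ 2) ≤
      ∑ t : ZMod n, ((f' t - y t) ^ 2 +
        (lam / (2 * (ε : ℝ) + 1)) *
          ∑ s ∈ Finset.Icc (-(ε:ℤ)) (ε:ℤ), (f' (t + (s:ZMod n)) - c t) ^ 2))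
      ↔ ∀ t : ZMod n, (1+lam) * f t
          = y t + (lam / (2 * (ε : ℝ) + 1)) *
              ∑ s ∈ Finset.Icc (-(ε:ℤ)) (ε:ℤ), c (t - (s:ZMod n)) := by
    constructor
    · intro h t
      have hpt : ∀ x : ℝ,
          (f t - y t) ^ 2 + (lam / (2 * (ε : ℝ) + 1)) *
              ∑ s ∈ Finset.Icc (-(ε:ℤ)) (ε:ℤ), (f t - c (t - (s:ZMod n))) ^ 2
          ≤ (x - y t) ^ 2 + (lam / (2 * (ε : ℝ) + 1)) *
              ∑ s ∈ Finset.Icc (-(ε:ℤ)) (ε:ℤ), (x - c (t - (s:ZMod n))) ^ 2 := by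
        intro x
        have h2 := h (Function.update f t x)
        rw [hresum f, hresum (Function.update f t x)] at h2
        rw [← Finset.add_sum_erase _ _ (Finset.mem_univ t),
            ← Finset.add_sum_erase _
              (fun u => ((Function.update f t x u - y u) ^ 2 +
                (lam / (2 * (ε : ℝ) + 1)) *
                  ∑ s ∈ Finset.Icc (-(ε:ℤ)) (ε:ℤ),
                    (Function.update f t x u - c (u - (s:ZMod n))) ^ 2))
              (Finset.mem_univ t)] at h2
        have herase : ∑ u ∈ Finset.univ.erase t,
              ((Function.update f t x u - y u) ^ 2 +
                (lam / (2 * (ε : ℝ) + 1)) *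
                  ∑ s ∈ Finset.Icc (-(ε:ℤ)) (ε:ℤ),
                    (Function.update f t x u - c (u - (s:ZMod n))) ^ 2)
            = ∑ u ∈ Finset.univ.erase t,
              ((f u - y u) ^ 2 +
                (lam / (2 * (ε : ℝ) + 1)) *
                  ∑ s ∈ Finset.Icc (-(ε:ℤ)) (ε:ℤ),
                    (f u - c (u - (s:ZMod n))) ^ 2) :=
          Finset.sum_congr rfl fun u hu => by
            rw [Function.update_of_ne (Finset.ne_of_mem_erase hu)]
        rw [herase, Function.update_self] at h2
        linarith
      have h6 : ∀ γ : ℝ,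
          (1+lam)*(f t)^2
            - 2*(y t + (lam / (2 * (ε : ℝ) + 1)) *
                ∑ s ∈ Finset.Icc (-(ε:ℤ)) (ε:ℤ), c (t - (s:ZMod n)))*(f t)
            + ((y t)^2 + (lam / (2 * (ε : ℝ) + 1)) *
                ∑ s ∈ Finset.Icc (-(ε:ℤ)) (ε:ℤ), (c (t - (s:ZMod n)))^2)
          ≤ (1+lam)*γ^2
            - 2*(y t + (lam / (2 * (ε : ℝ) + 1)) *
                ∑ s ∈ Finset.Icc (-(ε:ℤ)) (ε:ℤ), c (t - (s:ZMod n)))*γ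
            + ((y t)^2 + (lam / (2 * (ε : ℝ) + 1)) *
                ∑ s ∈ Finset.Icc (-(ε:ℤ)) (ε:ℤ), (c (t - (s:ZMod n)))^2) := by
        intro γ
        have h5 := hpt γ
        rw [hΦexp t (f t), hΦexp t γ] at h5
        exact h5
      exact (quad_minC h1lam (f t)).mp h6
    · intro h f'
      rw [hresum f, hresum f']
      apply Finset.sum_le_sum
      intro t _
      rw [hΦexp t (f t), hΦexp t (f' t)]
      exact (quad_minC h1lam (f t)).mpr (h t) (f' t)
  -- assemble
  unfold SymEquilibrium
  rw [forall_congr' keyA, keyB]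
  constructor
  · rintro ⟨hA, hB⟩
    refine ⟨hA, fun t => ?_⟩
    have hc : c = winAvg n ε f := funext hA
    have hB' := hB t
    rw [hsymm c t] at hB'
    have hcomp : (winAvg n ε ∘ winAvg n ε) f t = winAvg n ε c t := by
      rw [Function.comp_apply, hc]
    rw [hcomp]
    have hval : lam * winAvg n ε c t
        = (lam / (2 * (ε : ℝ) + 1)) *
            ∑ s ∈ Finset.Icc (-(ε:ℤ)) (ε:ℤ), c (t + (s:ZMod n)) := by
      simp only [winAvg]; ring
    have h7 : y t + lam * winAvg n ε c t = (1+lam) * f t := by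
      rw [hval, hB']
    rw [h7]
    field_simp
  · rintro ⟨hA, hB⟩
    refine ⟨hA, fun t => ?_⟩
    have hc : c = winAvg n ε f := funext hA
    have hB' := hB t
    have hcomp : (winAvg n ε ∘ winAvg n ε) f t = winAvg n ε c t := by
      rw [Function.comp_apply, hc]
    rw [hcomp] at hB'
    rw [hsymm c t]
    have hval : lam * winAvg n ε c t
        = (lam / (2 * (ε : ℝ) + 1)) *
            ∑ s ∈ Finset.Icc (-(ε:ℤ)) (ε:ℤ), c (t + (s:ZMod n)) := by
      simp only [winAvg]; ring
    rw [← hval, hB']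
    field_simp
end

section
/- Fix natural numbers n ≥ 1 and ε, data y : ZMod n → ℝ, and λ ≥ 0. Then the asymmetric co-operative game has exactly one Nash equilibrium (f, c), and the symmetric co-operative game has exactly one Nash equilibrium (f̃, c̃); in both cases the explainer equals the window average of the predictor (c = A f and c̃ = A f̃), the asymmetric equilibrium predictor is the unique solution of f = (1/(1+λ))·(y + λ·A f), and the symmetric equilibrium predictor is the unique solution of f̃ = (1/(1+λ))·(y + λ·A² f̃). -/
namespace Stmt9

lemma cardI (ε : ℕ) : (((Finset.Icc (-(ε:ℤ)) (ε:ℤ)).card : ℝ)) = 2*(ε:ℝ)+1 := by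
  rw [Int.card_Icc]; norm_cast; omega

lemma Npos (ε : ℕ) : (0:ℝ) < 2*(ε:ℝ)+1 := by positivity

lemma sum_window (n ε : ℕ) [NeZero n] (f : ZMod n → ℝ) (t : ZMod n) :
    ∑ s ∈ Finset.Icc (-(ε:ℤ)) (ε:ℤ), f (t + (s : ZMod n)) = (2*(ε:ℝ)+1) * winAvg n ε f t := by
  unfold winAvg
  field_simp

lemma sum_sq_expand (n ε : ℕ) [NeZero n] (g : ℤ → ℝ) (γ : ℝ) :
    ∑ s ∈ Finset.Icc (-(ε:ℤ)) (ε:ℤ), (g s - γ)^2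
      = (∑ s ∈ Finset.Icc (-(ε:ℤ)) (ε:ℤ), (g s)^2)
        - 2*γ*(∑ s ∈ Finset.Icc (-(ε:ℤ)) (ε:ℤ), g s) + (2*(ε:ℝ)+1)*γ^2 := by
  rw [Finset.sum_congr rfl (fun s _ => by ring :
    ∀ s ∈ Finset.Icc (-(ε:ℤ)) (ε:ℤ), (g s - γ)^2 = (g s)^2 - 2*γ*(g s) + γ^2)]
  rw [Finset.sum_add_distrib, Finset.sum_sub_distrib, ← Finset.mul_sum, Finset.sum_const,
    nsmul_eq_mul, cardI]

lemma dev_identity (n ε : ℕ) [NeZero n] (f : ZMod n → ℝ) (t : ZMod n) (γ : ℝ) :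
    ∑ s ∈ Finset.Icc (-(ε:ℤ)) (ε:ℤ), (f (t + (s : ZMod n)) - γ)^2
      = (∑ s ∈ Finset.Icc (-(ε:ℤ)) (ε:ℤ), (f (t + (s : ZMod n)) - winAvg n ε f t)^2)
        + (2*(ε:ℝ)+1)*(winAvg n ε f t - γ)^2 := by
  have hS := sum_window n ε f t
  rw [sum_sq_expand n ε (fun s => f (t + (s:ZMod n))) γ,
      sum_sq_expand n ε (fun s => f (t + (s:ZMod n))) (winAvg n ε f t)]
  rw [hS]
  ring

lemma quad_ineq (lam a b x xs : ℝ) (h : (1+lam)*xs = a + lam*b) :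
    (xs - a)^2 + lam*(xs - b)^2 + (1+lam)*(x - xs)^2 = (x - a)^2 + lam*(x - b)^2 := by
  linear_combination (2*(xs - x))*h

lemma pointwise_min (n : ℕ) [NeZero n] (G : ZMod n → ℝ → ℝ) (f : ZMod n → ℝ)
    (h : ∀ f' : ZMod n → ℝ, ∑ t, G t (f t) ≤ ∑ t, G t (f' t)) (t0 : ZMod n) (x : ℝ) :
    G t0 (f t0) ≤ G t0 x := by
  have h1 := h (Function.update f t0 x)
  rw [Fintype.sum_eq_add_sum_compl t0 (fun t => G t (f t)),
      Fintype.sum_eq_add_sum_compl t0 (fun t => G t (Function.update f t0 x t))] at h1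
  rw [Finset.sum_congr rfl (fun t ht => by
        rw [Function.update_of_ne (by simpa using ht)] :
      ∀ t ∈ ({t0}ᶜ : Finset (ZMod n)),
        G t (Function.update f t0 x t) = G t (f t))] at h1
  simpa using h1

noncomputable def Alin (n ε : ℕ) : (ZMod n → ℝ) →ₗ[ℝ] (ZMod n → ℝ) where
  toFun := winAvg n ε
  map_add' f g := by
    funext t; simp [winAvg, Finset.sum_add_distrib, mul_add]
  map_smul' r f := by
    funext t
    simp only [winAvg, Pi.smul_apply, smul_eq_mul, RingHom.id_apply, ← Finset.mul_sum]
    ring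

@[simp] lemma Alin_apply (n ε : ℕ) (f : ZMod n → ℝ) : Alin n ε f = winAvg n ε f := rfl

lemma winAvg_bound (n ε : ℕ) [NeZero n] (f : ZMod n → ℝ) (M : ℝ)
    (hM : ∀ t, |f t| ≤ M) (t : ZMod n) : |winAvg n ε f t| ≤ M := by
  have hN : (0:ℝ) < 2*(ε:ℝ)+1 := by positivity
  unfold winAvg
  have h1 : |∑ s ∈ Finset.Icc (-(ε:ℤ)) (ε:ℤ), f (t + (s:ZMod n))|
      ≤ ∑ s ∈ Finset.Icc (-(ε:ℤ)) (ε:ℤ), |f (t + (s:ZMod n))| :=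
    Finset.abs_sum_le_sum_abs _ _
  have h2 : ∑ s ∈ Finset.Icc (-(ε:ℤ)) (ε:ℤ), |f (t + (s:ZMod n))|
      ≤ ∑ _s ∈ Finset.Icc (-(ε:ℤ)) (ε:ℤ), M := Finset.sum_le_sum (fun s _ => hM _)
  rw [Finset.sum_const, nsmul_eq_mul, cardI] at h2
  rw [abs_mul, abs_of_pos (by positivity : (0:ℝ) < 1/(2*(ε:ℝ)+1))]
  rw [div_mul_eq_mul_div, one_mul, div_le_iff₀ hN]
  nlinarith [abs_nonneg (∑ s ∈ Finset.Icc (-(ε:ℤ)) (ε:ℤ), f (t + (s:ZMod n)))]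

lemma exists_unique_sol (n : ℕ) [NeZero n] (lam : ℝ) (hlam : 0 ≤ lam) (y : ZMod n → ℝ)
    (A : (ZMod n → ℝ) →ₗ[ℝ] (ZMod n → ℝ))
    (hA : ∀ (d : ZMod n → ℝ) (M : ℝ), (∀ t, |d t| ≤ M) → ∀ t, |A d t| ≤ M) :
    ∃! f : ZMod n → ℝ, f = fun t => (1/(1+lam)) * (y t + lam * A f t) := by
  have h1l : (0:ℝ) < 1 + lam := by linarith
  set L : (ZMod n → ℝ) →ₗ[ℝ] (ZMod n → ℝ) := (1+lam) • LinearMap.id - lam • A with hL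
  have hLapp : ∀ g t, L g t = (1+lam) * g t - lam * A g t := by
    intro g t; simp [hL, smul_eq_mul]
  have hinj : Function.Injective L := by
    rw [injective_iff_map_eq_zero]
    intro d hd
    have hd' : ∀ t, (1+lam) * d t = lam * A d t := by
      intro t
      have := congrFun hd t
      rw [hLapp] at this
      simpa [sub_eq_zero] using this
    obtain ⟨t0, -, ht0⟩ := Finset.exists_max_image Finset.univ (fun t => |d t|)
      ⟨0, Finset.mem_univ 0⟩
    have hb : ∀ t, |d t| ≤ |d t0| := fun t => ht0 t (Finset.mem_univ t)
    have hAb : |A d t0| ≤ |d t0| := hA d _ hb t0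
    have : (1+lam) * |d t0| ≤ lam * |d t0| := by
      calc (1+lam) * |d t0| = |(1+lam) * d t0| := by
            rw [abs_mul, abs_of_pos h1l]
        _ = |lam * A d t0| := by rw [hd' t0]
        _ = lam * |A d t0| := by rw [abs_mul, abs_of_nonneg hlam]
        _ ≤ lam * |d t0| := by exact mul_le_mul_of_nonneg_left hAb hlam
    have h0 : |d t0| ≤ 0 := by nlinarith
    funext t
    have := hb t
    have := abs_nonneg (d t)
    have : |d t| = 0 := le_antisymm (by linarith) (abs_nonneg _)
    simpa [abs_eq_zero] using this
  have hsurj : Function.Surjective L :=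
    (LinearMap.injective_iff_surjective).mp hinj
  have key : ∀ f : ZMod n → ℝ,
      (f = fun t => (1/(1+lam)) * (y t + lam * A f t)) ↔ L f = y := by
    intro f
    constructor
    · intro hf
      funext t
      have := congrFun hf t
      rw [hLapp, this]
      field_simp
      ring
    · intro hf
      funext t
      have := congrFun hf t
      rw [hLapp] at this
      have h2 : (1+lam) * f t = y t + lam * A f t := by linarith
      rw [← h2]
      field_simp
  obtain ⟨f, hf⟩ := hsurj y
  exact ⟨f, (key f).mpr hf, fun g hg => hinj (by rw [(key g).mp hg, hf])⟩

lemma reindex (n ε : ℕ) [NeZero n] (g : ZMod n → ZMod n → ℝ) :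
    ∑ t : ZMod n, ∑ s ∈ Finset.Icc (-(ε:ℤ)) (ε:ℤ), g (t + (s:ZMod n)) t
      = ∑ u : ZMod n, ∑ s ∈ Finset.Icc (-(ε:ℤ)) (ε:ℤ), g u (u - (s:ZMod n)) := by
  rw [Finset.sum_comm]
  conv_rhs => rw [Finset.sum_comm]
  refine Finset.sum_congr rfl (fun s _ => ?_)
  exact Fintype.sum_equiv (Equiv.addRight ((s:ZMod n))) _ _ (fun t => by simp)

lemma sum_neg (n ε : ℕ) [NeZero n] (c : ZMod n → ℝ) (u : ZMod n) :
    ∑ s ∈ Finset.Icc (-(ε:ℤ)) (ε:ℤ), c (u - (s:ZMod n))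
      = ∑ s ∈ Finset.Icc (-(ε:ℤ)) (ε:ℤ), c (u + (s:ZMod n)) := by
  refine Finset.sum_equiv (Equiv.neg ℤ) (fun i => by simp [Finset.mem_Icc]; omega)
    (fun i _ => ?_)
  simp [sub_eq_add_neg]

lemma quad_ineq_sym (lam x xs a N K Q : ℝ) (hN : N ≠ 0)
    (h : (1+lam)*xs = a + (lam/N)*K) :
    ((xs-a)^2 + (lam/N)*(Q - 2*xs*K + N*xs^2)) + (1+lam)*(x-xs)^2
      = (x-a)^2 + (lam/N)*(Q - 2*x*K + N*x^2) := by
  field_simp at h ⊢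
  linear_combination (2*(xs - x)) * h

lemma window_quad (n ε : ℕ) [NeZero n] (c : ZMod n → ℝ) (u : ZMod n) (x : ℝ) :
    ∑ s ∈ Finset.Icc (-(ε:ℤ)) (ε:ℤ), (x - c (u - (s:ZMod n)))^2
      = (∑ s ∈ Finset.Icc (-(ε:ℤ)) (ε:ℤ), (c (u - (s:ZMod n)))^2)
        - 2*x*(∑ s ∈ Finset.Icc (-(ε:ℤ)) (ε:ℤ), c (u - (s:ZMod n))) + (2*(ε:ℝ)+1)*x^2 := by
  rw [show (∑ s ∈ Finset.Icc (-(ε:ℤ)) (ε:ℤ), (x - c (u - (s:ZMod n)))^2)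
      = ∑ s ∈ Finset.Icc (-(ε:ℤ)) (ε:ℤ), (c (u - (s:ZMod n)) - x)^2 from
    Finset.sum_congr rfl (fun s _ => by ring)]
  exact sum_sq_expand n ε (fun s => c (u - (s:ZMod n))) x

lemma sym_point (n ε : ℕ) [NeZero n] (lam x xs a : ℝ) (c : ZMod n → ℝ) (u : ZMod n)
    (h : (1+lam)*xs
        = a + (lam/(2*(ε:ℝ)+1)) * ∑ s ∈ Finset.Icc (-(ε:ℤ)) (ε:ℤ), c (u - (s:ZMod n))) :
    ((xs-a)^2 + (lam/(2*(ε:ℝ)+1)) *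
        ∑ s ∈ Finset.Icc (-(ε:ℤ)) (ε:ℤ), (xs - c (u - (s:ZMod n)))^2) + (1+lam)*(x-xs)^2
      = (x-a)^2 + (lam/(2*(ε:ℝ)+1)) *
        ∑ s ∈ Finset.Icc (-(ε:ℤ)) (ε:ℤ), (x - c (u - (s:ZMod n)))^2 := by
  rw [window_quad n ε c u xs, window_quad n ε c u x]
  exact quad_ineq_sym lam x xs a _ _ _ (ne_of_gt (Npos ε)) h

lemma sym_obj_rw (n ε : ℕ) [NeZero n] (y : ZMod n → ℝ) (lam : ℝ) (f' c : ZMod n → ℝ) :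
    ∑ t : ZMod n, ((f' t - y t)^2 + (lam/(2*(ε:ℝ)+1)) *
        ∑ s ∈ Finset.Icc (-(ε:ℤ)) (ε:ℤ), (f' (t + (s:ZMod n)) - c t)^2)
      = ∑ u : ZMod n, ((f' u - y u)^2 + (lam/(2*(ε:ℝ)+1)) *
        ∑ s ∈ Finset.Icc (-(ε:ℤ)) (ε:ℤ), (f' u - c (u - (s:ZMod n)))^2) := by
  rw [Finset.sum_add_distrib, Finset.sum_add_distrib, ← Finset.mul_sum, ← Finset.mul_sum]
  congr 2
  rw [Finset.sum_comm]
  conv_rhs => rw [Finset.sum_comm]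
  refine Finset.sum_congr rfl (fun s _ => ?_)
  exact Fintype.sum_equiv (Equiv.addRight ((s:ZMod n))) _ _ (fun t => by simp)

lemma Ksum (n ε : ℕ) [NeZero n] (lam : ℝ) (c : ZMod n → ℝ) (u : ZMod n) :
    (lam/(2*(ε:ℝ)+1)) * ∑ s ∈ Finset.Icc (-(ε:ℤ)) (ε:ℤ), c (u - (s:ZMod n))
      = lam * winAvg n ε c u := by
  rw [sum_neg n ε c u, sum_window n ε c u]
  have hN := Npos ε
  field_simp

lemma cond1_forward (n ε : ℕ) [NeZero n] (f c : ZMod n → ℝ)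
    (h : ∀ t : ZMod n, ∀ γ : ℝ,
      ∑ s ∈ Finset.Icc (-(ε:ℤ)) (ε:ℤ), (f (t + (s:ZMod n)) - c t)^2 ≤
      ∑ s ∈ Finset.Icc (-(ε:ℤ)) (ε:ℤ), (f (t + (s:ZMod n)) - γ)^2) :
    c = winAvg n ε f := by
  funext t
  have h1 := h t (winAvg n ε f t)
  rw [dev_identity n ε f t (c t)] at h1
  have hN := Npos ε
  have h2 : (winAvg n ε f t - c t)^2 = 0 :=
    le_antisymm (by nlinarith [sq_nonneg (winAvg n ε f t - c t)]) (sq_nonneg _)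
  exact (sub_eq_zero.mp (sq_eq_zero_iff.mp h2)).symm

lemma cond1_backward (n ε : ℕ) [NeZero n] (f : ZMod n → ℝ) (t : ZMod n) (γ : ℝ) :
    ∑ s ∈ Finset.Icc (-(ε:ℤ)) (ε:ℤ), (f (t + (s:ZMod n)) - winAvg n ε f t)^2 ≤
      ∑ s ∈ Finset.Icc (-(ε:ℤ)) (ε:ℤ), (f (t + (s:ZMod n)) - γ)^2 := by
  rw [dev_identity n ε f t γ]
  nlinarith [sq_nonneg (winAvg n ε f t - γ), Npos ε]

lemma asym_char (n ε : ℕ) [NeZero n] (y : ZMod n → ℝ) (lam : ℝ) (hlam : 0 ≤ lam)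
    (f c : ZMod n → ℝ) (h : AsymEquilibrium n ε y lam f c) :
    c = winAvg n ε f ∧ f = fun t => (1/(1+lam)) * (y t + lam * winAvg n ε f t) := by
  obtain ⟨h1, h2⟩ := h
  have hc : c = winAvg n ε f := cond1_forward n ε f c h1
  have h1l : (0:ℝ) < 1 + lam := by linarith
  refine ⟨hc, funext fun t => ?_⟩
  set xs := (1/(1+lam)) * (y t + lam * c t) with hxs
  have hxs' : (1+lam) * xs = y t + lam * c t := by
    rw [hxs]; field_simp
  have hmin : (f t - y t)^2 + lam*(f t - c t)^2 ≤ (xs - y t)^2 + lam*(xs - c t)^2 :=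
    pointwise_min n (fun u x => (x - y u)^2 + lam*(x - c u)^2) f h2 t xs
  have hq := quad_ineq lam (y t) (c t) (f t) xs hxs'
  have h0 : (f t - xs)^2 ≤ 0 := by nlinarith
  have h00 : (f t - xs)^2 = 0 := le_antisymm h0 (sq_nonneg _)
  have hft : f t = xs := sub_eq_zero.mp (sq_eq_zero_iff.mp h00)
  rw [hft, hxs, hc]

lemma sym_char (n ε : ℕ) [NeZero n] (y : ZMod n → ℝ) (lam : ℝ) (hlam : 0 ≤ lam)
    (f c : ZMod n → ℝ) (h : SymEquilibrium n ε y lam f c) :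
    c = winAvg n ε f ∧
      f = fun t => (1/(1+lam)) * (y t + lam * winAvg n ε (winAvg n ε f) t) := by
  obtain ⟨h1, h2⟩ := h
  have hc : c = winAvg n ε f := cond1_forward n ε f c h1
  have h1l : (0:ℝ) < 1 + lam := by linarith
  have hN := Npos ε
  have h2' : ∀ f'' : ZMod n → ℝ,
      ∑ u : ZMod n, ((f u - y u)^2 + (lam/(2*(ε:ℝ)+1)) *
        ∑ s ∈ Finset.Icc (-(ε:ℤ)) (ε:ℤ), (f u - c (u - (s:ZMod n)))^2)
      ≤ ∑ u : ZMod n, ((f'' u - y u)^2 + (lam/(2*(ε:ℝ)+1)) *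
        ∑ s ∈ Finset.Icc (-(ε:ℤ)) (ε:ℤ), (f'' u - c (u - (s:ZMod n)))^2) := by
    intro f''
    rw [← sym_obj_rw n ε y lam f c, ← sym_obj_rw n ε y lam f'' c]
    exact h2 f''
  refine ⟨hc, funext fun u => ?_⟩
  set xs := (1/(1+lam)) * (y u + (lam/(2*(ε:ℝ)+1)) *
      ∑ s ∈ Finset.Icc (-(ε:ℤ)) (ε:ℤ), c (u - (s:ZMod n))) with hxs
  have hxs' : (1+lam)*xs = y u + (lam/(2*(ε:ℝ)+1)) *
      ∑ s ∈ Finset.Icc (-(ε:ℤ)) (ε:ℤ), c (u - (s:ZMod n)) := by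
    rw [hxs]; field_simp
  have hmin : (f u - y u)^2 + (lam/(2*(ε:ℝ)+1)) *
        ∑ s ∈ Finset.Icc (-(ε:ℤ)) (ε:ℤ), (f u - c (u - (s:ZMod n)))^2
      ≤ (xs - y u)^2 + (lam/(2*(ε:ℝ)+1)) *
        ∑ s ∈ Finset.Icc (-(ε:ℤ)) (ε:ℤ), (xs - c (u - (s:ZMod n)))^2 :=
    pointwise_min n (fun u x => (x - y u)^2 + (lam/(2*(ε:ℝ)+1)) *
      ∑ s ∈ Finset.Icc (-(ε:ℤ)) (ε:ℤ), (x - c (u - (s:ZMod n)))^2) f h2' u xs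
  have hq := sym_point n ε lam (f u) xs (y u) c u hxs'
  have h0 : (f u - xs)^2 ≤ 0 := by nlinarith
  have h00 : (f u - xs)^2 = 0 := le_antisymm h0 (sq_nonneg _)
  have hfu : f u = xs := sub_eq_zero.mp (sq_eq_zero_iff.mp h00)
  rw [hfu, hxs, hc, Ksum n ε lam (winAvg n ε f) u]

lemma asym_equil (n ε : ℕ) [NeZero n] (y : ZMod n → ℝ) (lam : ℝ) (hlam : 0 ≤ lam)
    (f : ZMod n → ℝ)
    (hf : f = fun t => (1/(1+lam)) * (y t + lam * winAvg n ε f t)) :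
    AsymEquilibrium n ε y lam f (winAvg n ε f) := by
  have h1l : (0:ℝ) < 1+lam := by linarith
  have hpt : ∀ t, (1+lam) * f t = y t + lam * winAvg n ε f t := by
    intro t
    rw [congrFun hf t]
    field_simp
  refine ⟨fun t γ => cond1_backward n ε f t γ, fun f' => ?_⟩
  apply Finset.sum_le_sum
  intro t _
  have hq := quad_ineq lam (y t) (winAvg n ε f t) (f' t) (f t) (hpt t)
  nlinarith [sq_nonneg (f' t - f t)]

lemma sym_equil (n ε : ℕ) [NeZero n] (y : ZMod n → ℝ) (lam : ℝ) (hlam : 0 ≤ lam)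
    (f : ZMod n → ℝ)
    (hf : f = fun t => (1/(1+lam)) * (y t + lam * winAvg n ε (winAvg n ε f) t)) :
    SymEquilibrium n ε y lam f (winAvg n ε f) := by
  have h1l : (0:ℝ) < 1+lam := by linarith
  have hN := Npos ε
  have hpt : ∀ u, (1+lam) * f u
      = y u + (lam/(2*(ε:ℝ)+1)) *
          ∑ s ∈ Finset.Icc (-(ε:ℤ)) (ε:ℤ), winAvg n ε f (u - (s:ZMod n)) := by
    intro u
    rw [Ksum n ε lam (winAvg n ε f) u]
    rw [congrFun hf u]
    field_simp
  refine ⟨fun t γ => cond1_backward n ε f t γ, fun f' => ?_⟩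
  rw [sym_obj_rw n ε y lam f (winAvg n ε f), sym_obj_rw n ε y lam f' (winAvg n ε f)]
  apply Finset.sum_le_sum
  intro u _
  have hq := sym_point n ε lam (f' u) (f u) (y u) (winAvg n ε f) u (hpt u)
  nlinarith [sq_nonneg (f' u - f u)]

end Stmt9

/-- the asymmetric game has exactly one Nash equilibrium and the
symmetric game has exactly one Nash equilibrium; in both the explainer is the
window average of the predictor; the asymmetric equilibrium predictor is the
unique solution of `f = (1/(1+λ))(y + λ A f)` and the symmetric one the unique
solution of `f = (1/(1+λ))(y + λ A² f)`. -/
theorem unique_equilibria_of_both_games (n ε : ℕ) [NeZero n]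
    (y : ZMod n → ℝ) (lam : ℝ) (hlam : 0 ≤ lam) :
    (∃! p : (ZMod n → ℝ) × (ZMod n → ℝ), AsymEquilibrium n ε y lam p.1 p.2) ∧
    (∃! p : (ZMod n → ℝ) × (ZMod n → ℝ), SymEquilibrium n ε y lam p.1 p.2) ∧
    (∀ f c : ZMod n → ℝ, AsymEquilibrium n ε y lam f c →
      c = winAvg n ε f ∧
      f = fun t => (1 / (1 + lam)) * (y t + lam * winAvg n ε f t)) ∧
    (∀ f c : ZMod n → ℝ, SymEquilibrium n ε y lam f c →
      c = winAvg n ε f ∧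
      f = fun t => (1 / (1 + lam)) * (y t + lam * winAvg n ε (winAvg n ε f) t)) ∧
    (∃! f : ZMod n → ℝ,
      f = fun t => (1 / (1 + lam)) * (y t + lam * winAvg n ε f t)) ∧
    (∃! f : ZMod n → ℝ,
      f = fun t => (1 / (1 + lam)) * (y t + lam * winAvg n ε (winAvg n ε f) t)) := by
  have EA : ∃! f : ZMod n → ℝ, f = fun t => (1/(1+lam)) * (y t + lam * winAvg n ε f t) := by
    have := Stmt9.exists_unique_sol n lam hlam y (Stmt9.Alin n ε)
      (fun d M h t => Stmt9.winAvg_bound n ε d M h t)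
    simpa using this
  have ES : ∃! f : ZMod n → ℝ,
      f = fun t => (1/(1+lam)) * (y t + lam * winAvg n ε (winAvg n ε f) t) := by
    have := Stmt9.exists_unique_sol n lam hlam y ((Stmt9.Alin n ε).comp (Stmt9.Alin n ε))
      (fun d M h t => Stmt9.winAvg_bound n ε _ M (fun t' => Stmt9.winAvg_bound n ε d M h t') t)
    simpa using this
  obtain ⟨fA, hfA, hfAu⟩ := EA
  obtain ⟨fS, hfS, hfSu⟩ := ES
  refine ⟨⟨(fA, winAvg n ε fA), Stmt9.asym_equil n ε y lam hlam fA hfA, ?_⟩,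
          ⟨(fS, winAvg n ε fS), Stmt9.sym_equil n ε y lam hlam fS hfS, ?_⟩,
          fun f c h => Stmt9.asym_char n ε y lam hlam f c h,
          fun f c h => Stmt9.sym_char n ε y lam hlam f c h,
          ⟨fA, hfA, hfAu⟩, ⟨fS, hfS, hfSu⟩⟩
  · rintro ⟨f, c⟩ h
    obtain ⟨hc, hf⟩ := Stmt9.asym_char n ε y lam hlam f c h
    have hffA : f = fA := hfAu f hf
    exact Prod.ext hffA (by rw [hc, hffA])
  · rintro ⟨f, c⟩ h
    obtain ⟨hc, hf⟩ := Stmt9.sym_char n ε y lam hlam f c h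
    have hffS : f = fS := hfSu f hf
    exact Prod.ext hffS (by rw [hc, hffS])
end
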